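/- For every real s, the function x ↦ P(x, 1/x + s·(-x)^{-3/2}) tends to s^4 - 2s^2 as x → -∞. -/

import Mathlib

open Filter
noncomputable def P (x y : ℝ) : ℝ := y^4*x^6 - 4*y^3*x^5 + (3*y^3+6*y^2)*x^4 + (-7*y^2-4*y)*x^3 + (3*y^2+5*y+1)*x^2 + (-3*y-1)*x + y
theorem stmt8 : ∀ s : ℝ,
    Tendsto (fun x : ℝ => P x (1/x + s*(-x)^(-(3:ℝ)/2))) atBot (nhds (s^4 - 2*s^2)) := by
  intro s
  have hneg : Tendsto (fun x : ℝ => -x) atBot atTop := tendsto_neg_atBot_atTop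
  have h12 : Tendsto (fun x : ℝ => (-x) ^ (-(1:ℝ)/2)) atBot (nhds 0) := by
    have := (tendsto_rpow_neg_atTop (by norm_num : (0:ℝ) < 1/2)).comp hneg
    simpa [neg_div, Function.comp_def] using this
  have hc : Continuous fun d : ℝ =>
      -d^2 + s*d^3 - 3*s*d + 3*s^2*d^2 + 3*s^3*d + (s^4 - 2*s^2) := by continuity
  have key : Tendsto (fun x : ℝ =>
      -((-x)^(-(1:ℝ)/2))^2 + s*((-x)^(-(1:ℝ)/2))^3 - 3*s*((-x)^(-(1:ℝ)/2))
        + 3*s^2*((-x)^(-(1:ℝ)/2))^2 + 3*s^3*((-x)^(-(1:ℝ)/2)) + (s^4 - 2*s^2))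
      atBot (nhds (s^4 - 2*s^2)) := by
    have := (hc.tendsto 0).comp h12
    simpa [Function.comp_def] using this
  refine key.congr' ?_
  filter_upwards [eventually_lt_atBot (0:ℝ)] with x hx
  set d := (-x) ^ (-(1:ℝ)/2) with hd
  have hnx : 0 < -x := by linarith
  have h2 : d^2 = (-x)⁻¹ := by
    rw [hd, ← Real.rpow_natCast ((-x) ^ (-(1:ℝ)/2)) 2, ← Real.rpow_mul hnx.le]
    norm_num [Real.rpow_neg_one]
  have h3 : (-x) ^ (-(3:ℝ)/2) = d^3 := by
    rw [hd, ← Real.rpow_natCast ((-x) ^ (-(1:ℝ)/2)) 3, ← Real.rpow_mul hnx.le]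
    norm_num
  have h : d^2 * x = -1 := by rw [h2]; field_simp [hx.ne]
  have h1 : 1/x = -d^2 := by rw [h2]; field_simp
  show _ = P x (1/x + s * (-x)^(-(3:ℝ)/2))
  rw [h3, h1]
  simp only [P]
  linear_combination (-((1)*d^10*x^5*s^4 + (-4)*d^9*x^5*s^3 + (6)*d^8*x^5*s^2 + (-1)*d^8*x^4*s^4 + (-4)*d^7*x^5*s + (3)*d^7*x^3*s^3 + (1)*d^6*x^5 + (6)*d^6*x^4*s^2 + (1)*d^6*x^3*s^4 + (-9)*d^6*x^3*s^2 + (-8)*d^5*x^4*s + (9)*d^5*x^3*s + (-3)*d^5*x^2*s^3 + (3)*d^4*x^4 + (-3)*d^4*x^3 + (-1)*d^4*x^2*s^4 + (2)*d^4*x^2*s^2 + (3)*d^4*x*s^2 + (-4)*d^3*x^3*s + (5)*d^3*x^2*s + (3)*d^3*x*s^3 + (-6)*d^3*x*s + (3)*d^2*x^3 + (-4)*d^2*x^2 + (1)*d^2*x*s^4 + (-2)*d^2*x*s^2 + (3)*d^2*x + (-3)*d^2*s^2 + (-3)*d*s^3 + (3)*d*s + (1)*x^2 + (-1)*x + (-1)*s^4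 + (2)*s^2)) * h
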